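/- Let G be a group with the Unique Root property that contains a conjugacy separable subgroup H of finite index. Then G is conjugacy separable. -/

import Mathlib

/-- A group is conjugacy separable if any two non-conjugate elements have
non-conjugate images in some finite quotient. -/
def ConjSeparable (G : Type*) [Group G] : Prop :=
  ∀ x y : G, ¬ IsConj x y →
    ∃ (Q : Type) (_ : Group Q) (_ : Finite Q) (φ : G →* Q), ¬ IsConj (φ x) (φ y)

/-- If a group `G` has the Unique Root property and contains a conjugacy
separable subgroup `H` of finite index, then `G` is conjugacy separable. -/
theorem conjSeparable_of_finiteIndex_uniqueRoots {G : Type*} [Group G]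
    (hUR : ∀ (x y : G) (n : ℕ), 0 < n → x ^ n = y ^ n → x = y)
    (H : Subgroup G) [H.FiniteIndex] (hH : ConjSeparable H) :
    ConjSeparable G := by
  intro x y hxy
  set N : Subgroup G := H.normalCore with hN
  have hNle : N ≤ H := H.normalCore_le
  haveI : N.FiniteIndex := H.finiteIndex_normalCore
  set n : ℕ := N.index with hnd
  have hn : 0 < n := Nat.pos_of_ne_zero Subgroup.FiniteIndex.index_ne_zero
  have hmemN : ∀ g : G, g ^ n ∈ N := fun g => N.pow_index_mem g
  -- y^n as an element of H
  have hyH : y ^ n ∈ H := hNle (hmemN y)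
  -- for every t, t⁻¹ x^n t ∈ H
  have hc : ∀ t : G, t⁻¹ * x ^ n * t ∈ H := by
    intro t
    have := Subgroup.Normal.conj_mem (inferInstance : N.Normal) _ (hmemN x) t⁻¹
    simpa using hNle this
  -- non-conjugacy in H
  have hsep : ∀ t : G, ¬ IsConj (⟨t⁻¹ * x ^ n * t, hc t⟩ : H) (⟨y ^ n, hyH⟩ : H) := by
    intro t hconj
    rw [isConj_iff] at hconj
    obtain ⟨a, ha⟩ := hconj
    apply hxy
    have ha' : (a : G) * (t⁻¹ * x ^ n * t) * (a : G)⁻¹ = y ^ n := congrArg Subtype.val ha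
    have key : ((a : G) * t⁻¹ * x * ((a : G) * t⁻¹)⁻¹) ^ n = y ^ n := by
      rw [conj_pow]
      group
      group at ha'
      exact ha'
    exact isConj_iff.mpr ⟨(a : G) * t⁻¹, hUR _ _ n hn key⟩
  -- choose separating finite quotients of H for each coset
  choose Q instQ instFin φ hφ using fun q : G ⧸ H =>
    hH ⟨(q.out)⁻¹ * x ^ n * q.out, hc q.out⟩ ⟨y ^ n, hyH⟩ (hsep q.out)
  -- the intersection of kernels, pushed to G
  let K : G ⧸ H → Subgroup G := fun q => (φ q).ker.map H.subtype
  have hKfin : ∀ q, (K q).FiniteIndex := by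
    intro q
    haveI : Finite (Q q) := instFin q
    have hker : (φ q).ker.index ≠ 0 := by
      rw [Subgroup.index_ker]
      exact Nat.card_ne_zero.mpr ⟨⟨1⟩, Subtype.finite⟩
    constructor
    rw [Subgroup.index_map_subtype]
    exact Nat.mul_ne_zero hker Subgroup.FiniteIndex.index_ne_zero
  haveI hInf : (⨅ q, K q).FiniteIndex := Subgroup.finiteIndex_iInf hKfin
  set M : Subgroup G := (⨅ q, K q).normalCore with hM
  haveI hMfin : M.FiniteIndex := Subgroup.finiteIndex_normalCore _
  have hMle : ∀ q, M ≤ K q := fun q =>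
    le_trans (Subgroup.normalCore_le _) (iInf_le _ q)
  -- main separation claim in G ⧸ M
  have hsepG : ¬ IsConj ((QuotientGroup.mk' M) x) ((QuotientGroup.mk' M) y) := by
    intro hconj
    rw [isConj_iff] at hconj
    obtain ⟨z, hz⟩ := hconj
    obtain ⟨g, rfl⟩ := QuotientGroup.mk'_surjective M z
    have hz' : (QuotientGroup.mk' M) (g * x ^ n * g⁻¹) = (QuotientGroup.mk' M) (y ^ n) := by
      have h1 : (QuotientGroup.mk' M) (g * x * g⁻¹) = (QuotientGroup.mk' M) y := by
        simpa using hz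
      calc (QuotientGroup.mk' M) (g * x ^ n * g⁻¹)
          = ((QuotientGroup.mk' M) (g * x * g⁻¹)) ^ n := by
            rw [← map_pow, conj_pow]
        _ = ((QuotientGroup.mk' M) y) ^ n := by rw [h1]
        _ = (QuotientGroup.mk' M) (y ^ n) := by rw [map_pow]
    have hm : (g * x ^ n * g⁻¹)⁻¹ * y ^ n ∈ M := by
      rw [QuotientGroup.mk'_apply, QuotientGroup.mk'_apply, QuotientGroup.eq] at hz'
      exact hz'
    set q : G ⧸ H := QuotientGroup.mk g⁻¹ with hq
    set t : G := q.out with ht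
    have hta : t⁻¹ * g⁻¹ ∈ H := by
      rw [← QuotientGroup.eq, ht, hq]
      exact QuotientGroup.out_eq' _
    set a : H := ⟨t⁻¹ * g⁻¹, hta⟩ with hadef
    obtain ⟨m, hmker, hmval⟩ := hMle q hm
    apply hφ q
    have hHid : (a⁻¹ * ⟨t⁻¹ * x ^ n * t, hc t⟩ * a : H) = ⟨y ^ n, hyH⟩ * m⁻¹ := by
      apply Subtype.ext
      push_cast
      have hmv : (m : G) = (g * x ^ n * g⁻¹)⁻¹ * y ^ n := hmval
      rw [hmv]
      simp only [hadef]
      group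
    have hone : (φ q) m = 1 := hmker
    have hH1 : (φ q) (a⁻¹ * ⟨t⁻¹ * x ^ n * t, hc t⟩ * a) = (φ q) ⟨y ^ n, hyH⟩ := by
      rw [hHid, map_mul, map_inv, hone]
      simp
    exact isConj_iff.mpr ⟨(φ q) a⁻¹, by simpa [map_mul, map_inv, mul_assoc] using hH1⟩
  -- package into a small finite quotient
  haveI : Finite (G ⧸ M) := M.finite_quotient_of_finiteIndex
  haveI : Small.{0} (G ⧸ M) := small_of_injective (f := Finite.equivFin (G ⧸ M)) (Equiv.injective _)
  let ψ : Shrink.{0} (G ⧸ M) ≃* G ⧸ M := Shrink.mulEquiv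
  refine ⟨Shrink.{0} (G ⧸ M), inferInstance, Finite.of_equiv _ ψ.symm.toEquiv,
    (ψ.symm.toMonoidHom).comp (QuotientGroup.mk' M), ?_⟩
  intro hconj
  apply hsepG
  have h2 := ψ.toMonoidHom.map_isConj hconj
  simpa using h2
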